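/- Let ν = (ν_l, ν_r) be square matrices with zero constant terms over K[[x_1,...,x_p]], and A ∈ Mat(m,n,p). If π_{j−1}(ν_l A − A ν_r) = 0, then π_j(exp(ν_l) A exp(−ν_r)) = π_j A + π_j(ν_l A − A ν_r). -/

import Mathlib

/-- Truncation of a formal power series to total degree `≤ j`. -/
noncomputable def truncLE (K : Type*) [CommRing K] (p j : ℕ)
    (f : MvPowerSeries (Fin p) K) : MvPowerSeries (Fin p) K :=
  fun d => if (d.sum fun _ n => n) ≤ j then MvPowerSeries.coeff d f else 0

/-- The `j`-jet of a matrix of formal power series. -/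
noncomputable def jet {K : Type*} [CommRing K] {m n p : ℕ} (j : ℕ)
    (A : Matrix (Fin m) (Fin n) (MvPowerSeries (Fin p) K)) :
    Matrix (Fin m) (Fin n) (MvPowerSeries (Fin p) K) :=
  A.map (truncLE K p j)

/-- Convergence of a sequence of matrices in the `(x)`-adic (jet) topology. -/
def ConvergesTo {K : Type*} [CommRing K] {m n p : ℕ}
    (s : ℕ → Matrix (Fin m) (Fin n) (MvPowerSeries (Fin p) K))
    (L : Matrix (Fin m) (Fin n) (MvPowerSeries (Fin p) K)) : Prop :=
  ∀ j : ℕ, ∃ k₀ : ℕ, ∀ k ≥ k₀, jet j (s k) = jet j L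

/-- Partial sums of the matrix exponential series `Σ λ^i / i!`. -/
noncomputable def expPartial {K : Type*} [Field K] {m p : ℕ}
    (ν : Matrix (Fin m) (Fin m) (MvPowerSeries (Fin p) K)) (k : ℕ) :
    Matrix (Fin m) (Fin m) (MvPowerSeries (Fin p) K) :=
  ∑ i ∈ Finset.range (k + 1), ((i.factorial : K)⁻¹) • ν ^ i

/-- `E` is the exponential of `ν`, i.e. the limit of the partial sums of `Σ ν^i/i!`. -/
def IsExpOf {K : Type*} [Field K] {m p : ℕ}
    (ν E : Matrix (Fin m) (Fin m) (MvPowerSeries (Fin p) K)) : Prop :=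
  ConvergesTo (expPartial ν) E

namespace JetAux

variable {K : Type*} [Field K] {p : ℕ}

/-- total degree of an exponent -/
def deg {p : ℕ} (d : Fin p →₀ ℕ) : ℕ := d.sum fun _ n => n

lemma deg_add {p : ℕ} (d e : Fin p →₀ ℕ) : deg (d + e) = deg d + deg e :=
  Finsupp.sum_add_index' (fun _ => rfl) (fun _ _ _ => rfl)

lemma deg_eq_zero_iff {p : ℕ} (d : Fin p →₀ ℕ) : deg d = 0 ↔ d = 0 := by
  constructor
  · intro h
    ext x
    simp only [Finsupp.coe_zero, Pi.zero_apply]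
    by_contra hx
    have hmem : x ∈ d.support := Finsupp.mem_support_iff.mpr hx
    have hdeg : deg d = ∑ y ∈ d.support, d y := rfl
    have : d x ≤ ∑ y ∈ d.support, d y :=
      Finset.single_le_sum (fun _ _ => Nat.zero_le _) hmem
    omega
  · rintro rfl; rfl

/-- All coefficients of total degree ≤ J vanish. -/
def Van {α β : Type*} (J : ℕ) (X : Matrix α β (MvPowerSeries (Fin p) K)) : Prop :=
  ∀ a b d, deg d ≤ J → MvPowerSeries.coeff d (X a b) = 0

lemma Van.mono {α β : Type*} {J J' : ℕ} {X : Matrix α β (MvPowerSeries (Fin p) K)}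
    (h : Van J X) (hle : J' ≤ J) : Van J' X :=
  fun a b d hd => h a b d (hd.trans hle)

lemma Van.zero {α β : Type*} (J : ℕ) : Van (p := p) (K := K) (α := α) (β := β) J 0 := by
  intro a b d _; simp [Matrix.zero_apply]

lemma Van.add {α β : Type*} {J : ℕ} {X Y : Matrix α β (MvPowerSeries (Fin p) K)}
    (hX : Van J X) (hY : Van J Y) : Van J (X + Y) := by
  intro a b d hd
  simp [Matrix.add_apply, map_add, hX a b d hd, hY a b d hd]

lemma Van.neg {α β : Type*} {J : ℕ} {X : Matrix α β (MvPowerSeries (Fin p) K)}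
    (hX : Van J X) : Van J (-X) := by
  intro a b d hd
  simp [Matrix.neg_apply, map_neg, hX a b d hd]

lemma Van.sub {α β : Type*} {J : ℕ} {X Y : Matrix α β (MvPowerSeries (Fin p) K)}
    (hX : Van J X) (hY : Van J Y) : Van J (X - Y) := by
  intro a b d hd
  simp [Matrix.sub_apply, map_sub, hX a b d hd, hY a b d hd]

lemma Van.smul {α β : Type*} {J : ℕ} {X : Matrix α β (MvPowerSeries (Fin p) K)}
    (hX : Van J X) (c : K) : Van J (c • X) := by
  intro a b d hd
  simp [Matrix.smul_apply, hX a b d hd]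

lemma Van.sum {α β γ : Type*} {J : ℕ} (s : Finset γ)
    (f : γ → Matrix α β (MvPowerSeries (Fin p) K))
    (hf : ∀ x ∈ s, Van J (f x)) : Van J (∑ x ∈ s, f x) := by
  intro a b d hd
  rw [Matrix.sum_apply, map_sum]
  exact Finset.sum_eq_zero fun x hx => hf x hx a b d hd

lemma Van.mul_right {α β γ : Type*} [Fintype β] {J : ℕ}
    {X : Matrix α β (MvPowerSeries (Fin p) K)}
    (Y : Matrix β γ (MvPowerSeries (Fin p) K)) (hX : Van J X) : Van J (X * Y) := by
  intro a c d hd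
  rw [Matrix.mul_apply, map_sum]
  refine Finset.sum_eq_zero fun b _ => ?_
  rw [MvPowerSeries.coeff_mul]
  refine Finset.sum_eq_zero fun x hx => ?_
  rw [Finset.HasAntidiagonal.mem_antidiagonal] at hx
  have h1 : deg x.1 ≤ J := by
    have := deg_add x.1 x.2
    rw [hx] at this
    omega
  rw [hX a b x.1 h1, zero_mul]

lemma Van.mul_left {α β γ : Type*} [Fintype β] {J : ℕ}
    (X : Matrix α β (MvPowerSeries (Fin p) K))
    {Y : Matrix β γ (MvPowerSeries (Fin p) K)} (hY : Van J Y) : Van J (X * Y) := by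
  intro a c d hd
  rw [Matrix.mul_apply, map_sum]
  refine Finset.sum_eq_zero fun b _ => ?_
  rw [MvPowerSeries.coeff_mul]
  refine Finset.sum_eq_zero fun x hx => ?_
  rw [Finset.HasAntidiagonal.mem_antidiagonal] at hx
  have h2 : deg x.2 ≤ J := by
    have := deg_add x.1 x.2
    rw [hx] at this
    omega
  rw [hY b c x.2 h2, mul_zero]

lemma Van.mul_add {α β γ : Type*} [Fintype β] {Ja Jb : ℕ}
    {X : Matrix α β (MvPowerSeries (Fin p) K)}
    {Y : Matrix β γ (MvPowerSeries (Fin p) K)}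
    (hX : Van Ja X) (hY : Van Jb Y) : Van (Ja + Jb + 1) (X * Y) := by
  intro a c d hd
  rw [Matrix.mul_apply, map_sum]
  refine Finset.sum_eq_zero fun b _ => ?_
  rw [MvPowerSeries.coeff_mul]
  refine Finset.sum_eq_zero fun x hx => ?_
  rw [Finset.HasAntidiagonal.mem_antidiagonal] at hx
  have hdd := deg_add x.1 x.2
  rw [hx] at hdd
  by_cases h1 : deg x.1 ≤ Ja
  · rw [hX a b x.1 h1, zero_mul]
  · have h2 : deg x.2 ≤ Jb := by omega
    rw [hY b c x.2 h2, mul_zero]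

lemma Van.pow {q : ℕ} {ν : Matrix (Fin q) (Fin q) (MvPowerSeries (Fin p) K)}
    (hν : Van 0 ν) : ∀ i : ℕ, Van i (ν ^ (i + 1)) := by
  intro i
  induction i with
  | zero => simpa using hν
  | succ i ih =>
    have := ih.mul_add hν
    rw [pow_succ ν (i + 1)] at *
    simpa using this

lemma jet_eq_iff {m n : ℕ} (J : ℕ) (X Y : Matrix (Fin m) (Fin n) (MvPowerSeries (Fin p) K)) :
    jet J X = jet J Y ↔ Van J (X - Y) := by
  constructor
  · intro h a b d hd
    have := congrFun (congrFun h a) b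
    simp only [jet, Matrix.map_apply] at this
    have h2 := congrFun this d
    have h3 : MvPowerSeries.coeff d (X a b) = MvPowerSeries.coeff d (Y a b) := by
      simpa [truncLE, show (d.sum fun _ n => n) ≤ J from hd] using h2
    rw [Matrix.sub_apply, map_sub, h3, sub_self]
  · intro h
    funext a b
    simp only [jet, Matrix.map_apply]
    funext d
    simp only [truncLE]
    by_cases hd : (d.sum fun _ n => n) ≤ J
    · simp only [hd, if_pos]
      have := h a b d hd
      rw [Matrix.sub_apply, map_sub, sub_eq_zero] at this
      exact this
    · simp [hd]

lemma truncLE_add {j : ℕ} (f g : MvPowerSeries (Fin p) K) :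
    truncLE K p j (f + g) = truncLE K p j f + truncLE K p j g := by
  funext d
  have h : (truncLE K p j f + truncLE K p j g) d
      = truncLE K p j f d + truncLE K p j g d := rfl
  rw [h]
  simp only [truncLE, map_add]
  split <;> simp

lemma jet_zero {m n : ℕ} (J : ℕ) :
    jet J (0 : Matrix (Fin m) (Fin n) (MvPowerSeries (Fin p) K)) = 0 := by
  funext a b
  funext d
  show (if (d.sum fun _ n => n) ≤ J
      then MvPowerSeries.coeff d ((0 : Matrix (Fin m) (Fin n) (MvPowerSeries (Fin p) K)) a b)
      else 0) = (0 : MvPowerSeries (Fin p) K) d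
  rw [Matrix.zero_apply, map_zero, ite_self]
  rfl

lemma jet_add {m n : ℕ} (J : ℕ) (X Y : Matrix (Fin m) (Fin n) (MvPowerSeries (Fin p) K)) :
    jet J (X + Y) = jet J X + jet J Y := by
  funext a b
  show truncLE K p J ((X + Y) a b) = truncLE K p J (X a b) + truncLE K p J (Y a b)
  rw [Matrix.add_apply, truncLE_add]

variable [CharZero K]

lemma alt_sum {N : ℕ} (hN : N ≠ 0) :
    ∑ i ∈ Finset.range (N + 1), ((-1 : K) ^ i * (N.choose i : K)) = 0 := by
  have h := Int.alternating_sum_range_choose (n := N)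
  rw [if_neg hN] at h
  have h2 := congrArg (fun z : ℤ => (z : K)) h
  push_cast at h2
  simpa using h2

lemma binom_sum {N : ℕ} (hN : 1 ≤ N) :
    ∑ x ∈ Finset.HasAntidiagonal.antidiagonal N,
      ((x.1.factorial : K)⁻¹ * ((-1) ^ x.2 * (x.2.factorial : K)⁻¹)) = 0 := by
  rw [Finset.Nat.sum_antidiagonal_eq_sum_range_succ_mk]
  have hterm : ∀ i ∈ Finset.range (N + 1),
      ((i.factorial : K)⁻¹ * ((-1) ^ (N - i) * (((N - i).factorial : K)⁻¹)))
        = ((-1 : K) ^ (N - i) * (N.choose i : K)) * ((N.factorial : K)⁻¹) := by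
    intro i hi
    rw [Finset.mem_range] at hi
    have hle : i ≤ N := by omega
    have hfact : ((N.choose i : K) * (i.factorial : K) * ((N - i).factorial : K))
        = (N.factorial : K) := by
      exact_mod_cast congrArg (Nat.cast : ℕ → K) (Nat.choose_mul_factorial_mul_factorial hle)
    have h1 : (i.factorial : K) ≠ 0 := Nat.cast_ne_zero.mpr i.factorial_ne_zero
    have h2 : (((N - i).factorial : K)) ≠ 0 := Nat.cast_ne_zero.mpr (N - i).factorial_ne_zero
    have h3 : ((N.factorial : K)) ≠ 0 := Nat.cast_ne_zero.mpr N.factorial_ne_zero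
    field_simp
    linear_combination (-1 : K) * hfact
  rw [Finset.sum_congr rfl hterm, ← Finset.sum_mul]
  have hrefl : ∑ i ∈ Finset.range (N + 1), ((-1 : K) ^ (N - i) * (N.choose i : K))
      = ∑ i ∈ Finset.range (N + 1), ((-1 : K) ^ i * (N.choose i : K)) := by
    have h := Finset.sum_range_reflect (fun i => (-1 : K) ^ i * (N.choose i : K)) (N + 1)
    rw [← h]
    refine Finset.sum_congr rfl fun i hi => ?_
    rw [Finset.mem_range] at hi
    have h1 : N + 1 - 1 - i = N - i := by omega
    rw [h1, Nat.choose_symm (by omega : i ≤ N)]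
  rw [hrefl, alt_sum (by omega), zero_mul]

lemma coeff_expPoly (c : ℕ → K) (k N : ℕ) :
    (∑ i ∈ Finset.range (k + 1), c i • (Polynomial.X ^ i : Polynomial K)).coeff N
      = if N ≤ k then c N else 0 := by
  rw [Polynomial.finset_sum_coeff]
  simp only [Polynomial.coeff_smul, Polynomial.coeff_X_pow, smul_eq_mul, mul_ite, mul_one,
    mul_zero]
  rw [Finset.sum_ite_eq (Finset.range (k + 1)) N c]
  simp [Nat.lt_succ_iff]

lemma van_aeval {q : ℕ} {ν : Matrix (Fin q) (Fin q) (MvPowerSeries (Fin p) K)} (hν : Van 0 ν)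
    {k : ℕ} {P : Polynomial K} (hP : ∀ N, N ≤ k → P.coeff N = 0) :
    Van k (Polynomial.aeval ν P) := by
  rw [Polynomial.aeval_eq_sum_range]
  apply Van.sum
  intro i _
  by_cases hik : i ≤ k
  · rw [hP i hik, zero_smul]; exact Van.zero k
  · have hv : Van (i - 1) (ν ^ i) := by
      have h := Van.pow hν (i - 1)
      rwa [Nat.sub_add_cancel (by omega)] at h
    exact (hv.mono (by omega)).smul _

lemma expPartial_eq_aeval {q : ℕ} (ν : Matrix (Fin q) (Fin q) (MvPowerSeries (Fin p) K))
    (k : ℕ) :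
    expPartial ν k
      = Polynomial.aeval ν
          (∑ i ∈ Finset.range (k + 1), ((i.factorial : K)⁻¹) • (Polynomial.X ^ i : Polynomial K)) := by
  rw [map_sum]
  refine Finset.sum_congr rfl fun i _ => ?_
  rw [map_smul, map_pow, Polynomial.aeval_X]

lemma expPartial_neg_eq_aeval {q : ℕ} (ν : Matrix (Fin q) (Fin q) (MvPowerSeries (Fin p) K))
    (k : ℕ) :
    expPartial (-ν) k
      = Polynomial.aeval ν
          (∑ i ∈ Finset.range (k + 1),
            (((-1 : K) ^ i * (i.factorial : K)⁻¹)) • (Polynomial.X ^ i : Polynomial K)) := by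
  rw [map_sum]
  unfold expPartial
  refine Finset.sum_congr rfl fun i _ => ?_
  rw [map_smul, map_pow, Polynomial.aeval_X]
  rw [show (-ν) = (-1 : K) • ν from (neg_one_smul K ν).symm, smul_pow, smul_smul, mul_comm]

lemma van_expPartial_mul_neg {q : ℕ} (ν : Matrix (Fin q) (Fin q) (MvPowerSeries (Fin p) K))
    (hν : Van 0 ν) (k : ℕ) :
    Van k (expPartial ν k * expPartial (-ν) k - 1) := by
  have hrw : expPartial ν k * expPartial (-ν) k - 1
      = Polynomial.aeval ν
          ((∑ i ∈ Finset.range (k + 1), ((i.factorial : K)⁻¹) • (Polynomial.X ^ i : Polynomial K))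
            * (∑ i ∈ Finset.range (k + 1),
                (((-1 : K) ^ i * (i.factorial : K)⁻¹)) • (Polynomial.X ^ i : Polynomial K)) - 1) := by
    rw [map_sub, map_one, map_mul, ← expPartial_eq_aeval, ← expPartial_neg_eq_aeval]
  rw [hrw]
  apply van_aeval hν
  intro N hN
  rw [Polynomial.coeff_sub, Polynomial.coeff_mul]
  have hco : ∀ x ∈ Finset.HasAntidiagonal.antidiagonal N,
      (∑ i ∈ Finset.range (k + 1), ((i.factorial : K)⁻¹) • (Polynomial.X ^ i : Polynomial K)).coeff x.1
        * (∑ i ∈ Finset.range (k + 1),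
            (((-1 : K) ^ i * (i.factorial : K)⁻¹)) • (Polynomial.X ^ i : Polynomial K)).coeff x.2
      = (x.1.factorial : K)⁻¹ * ((-1) ^ x.2 * (x.2.factorial : K)⁻¹) := by
    intro x hx
    rw [Finset.HasAntidiagonal.mem_antidiagonal] at hx
    rw [coeff_expPoly, coeff_expPoly, if_pos (by omega), if_pos (by omega)]
  rw [Finset.sum_congr rfl hco]
  rcases Nat.eq_zero_or_pos N with h0 | h1
  · subst h0
    simp
  · rw [binom_sum h1, Polynomial.coeff_one, if_neg (by omega), zero_sub, neg_eq_zero]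

end JetAux

open JetAux in
/-- If `π_j(ν_l A - A ν_r) = 0` then
`π_{j+1}(exp(ν_l) A exp(-ν_r)) = π_{j+1} A + π_{j+1}(ν_l A - A ν_r)`. -/
theorem jet_linearization {K : Type*} [Field K] [CharZero K] {m n p : ℕ}
    (νl : Matrix (Fin m) (Fin m) (MvPowerSeries (Fin p) K))
    (νr : Matrix (Fin n) (Fin n) (MvPowerSeries (Fin p) K))
    (hl : ∀ a b, MvPowerSeries.constantCoeff (νl a b) = 0)
    (hr : ∀ a b, MvPowerSeries.constantCoeff (νr a b) = 0)
    (El : Matrix (Fin m) (Fin m) (MvPowerSeries (Fin p) K))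
    (Er : Matrix (Fin n) (Fin n) (MvPowerSeries (Fin p) K))
    (hEl : IsExpOf νl El) (hEr : IsExpOf (-νr) Er)
    (A : Matrix (Fin m) (Fin n) (MvPowerSeries (Fin p) K)) (j : ℕ)
    (h : jet j (νl * A - A * νr) = 0) :
    jet (j + 1) (El * A * Er) = jet (j + 1) A + jet (j + 1) (νl * A - A * νr) := by
  classical
  have hνl : Van 0 νl := by
    intro a b d hd
    have hd0 : d = 0 := (deg_eq_zero_iff d).mp (Nat.le_zero.mp hd)
    subst hd0
    rw [MvPowerSeries.coeff_zero_eq_constantCoeff]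
    exact hl a b
  have hνr : Van 0 νr := by
    intro a b d hd
    have hd0 : d = 0 := (deg_eq_zero_iff d).mp (Nat.le_zero.mp hd)
    subst hd0
    rw [MvPowerSeries.coeff_zero_eq_constantCoeff]
    exact hr a b
  have hμ : Van 0 (-νr) := hνr.neg
  have hC : Van j (νl * A - A * νr) := by
    have h0 : jet j (νl * A - A * νr) = jet j (0 : Matrix (Fin m) (Fin n) (MvPowerSeries (Fin p) K)) := by
      rw [jet_zero]; exact h
    have := (jet_eq_iff j _ _).mp h0
    simpa using this
  obtain ⟨k₁, hk₁⟩ := hEl (j + 1)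
  obtain ⟨k₂, hk₂⟩ := hEr (j + 1)
  set k := max (max k₁ k₂) (j + 1) with hkdef
  have hkj : j + 1 ≤ k := le_max_right _ _
  have hk1 : 1 ≤ k := by omega
  have hP := hk₁ k (le_trans (le_max_left _ _) (le_max_left _ _))
  have hQ := hk₂ k (le_trans (le_max_right _ _) (le_max_left _ _))
  have hvP : Van (j + 1) (El - expPartial νl k) := by
    have h1 := (jet_eq_iff (j + 1) (expPartial νl k) El).mp hP
    have h2 := h1.neg
    rwa [neg_sub] at h2
  have hvQ : Van (j + 1) (Er - expPartial (-νr) k) := by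
    have h1 := (jet_eq_iff (j + 1) (expPartial (-νr) k) Er).mp hQ
    have h2 := h1.neg
    rwa [neg_sub] at h2
  -- claimC : mixed products with one C factor vanish
  have claimC : ∀ a b : ℕ, 1 ≤ a + b →
      Van (j + 1) (νl ^ a * (νl * A - A * νr) * (-νr) ^ b) := by
    intro a b hab
    cases a with
    | zero =>
      cases b with
      | zero => omega
      | succ b' =>
        have hone : νl ^ 0 * (νl * A - A * νr) * (-νr) ^ (b' + 1)
            = (νl * A - A * νr) * (-νr) ^ (b' + 1) := by simp
        rw [hone]
        exact (hC.mul_add (hμ.pow b')).mono (by omega)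
    | succ a' =>
      have h1 : Van (a' + j + 1) (νl ^ (a' + 1) * (νl * A - A * νr)) :=
        (hνl.pow a').mul_add hC
      exact (h1.mul_right ((-νr) ^ b)).mono (by omega)
  have hCA : νl * A = (νl * A - A * νr) - A * (-νr) := by
    rw [Matrix.mul_neg, sub_neg_eq_add]
    abel
  -- claim2
  have claim2 : ∀ a b : ℕ, 2 ≤ a + b →
      Van (j + 1) (νl ^ a * A * (-νr) ^ b - ((-1 : K) ^ a) • (A * (-νr) ^ (a + b))) := by
    intro a
    induction a with
    | zero =>
      intro b hb
      have e : νl ^ 0 * A * (-νr) ^ b - ((-1 : K) ^ 0) • (A * (-νr) ^ (0 + b)) = 0 := by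
        simp
      rw [e]; exact Van.zero _
    | succ a ih =>
      intro b hb
      have e1 : νl ^ (a + 1) * A * (-νr) ^ b
          = νl ^ a * (νl * A - A * νr) * (-νr) ^ b - νl ^ a * A * (-νr) ^ (b + 1) := by
        calc νl ^ (a + 1) * A * (-νr) ^ b
            = νl ^ a * (νl * A) * (-νr) ^ b := by
              rw [pow_succ νl a, Matrix.mul_assoc (νl ^ a) νl A]
          _ = νl ^ a * ((νl * A - A * νr) - A * (-νr)) * (-νr) ^ b := by rw [← hCA]
          _ = νl ^ a * (νl * A - A * νr) * (-νr) ^ b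
                - νl ^ a * (A * (-νr)) * (-νr) ^ b := by
              rw [Matrix.mul_sub (νl ^ a), Matrix.sub_mul]
          _ = νl ^ a * (νl * A - A * νr) * (-νr) ^ b - νl ^ a * A * (-νr) ^ (b + 1) := by
              rw [← Matrix.mul_assoc (νl ^ a) A (-νr),
                Matrix.mul_assoc (νl ^ a * A) (-νr) ((-νr) ^ b), ← pow_succ' (-νr) b]
      have e2 : ((-1 : K) ^ (a + 1)) • (A * (-νr) ^ (a + 1 + b))
          = -(((-1 : K) ^ a) • (A * (-νr) ^ (a + (b + 1)))) := by
        rw [show a + 1 + b = a + (b + 1) by omega, pow_succ, mul_smul, neg_one_smul, smul_neg]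
      rw [e1, e2]
      have e3 : νl ^ a * (νl * A - A * νr) * (-νr) ^ b - νl ^ a * A * (-νr) ^ (b + 1)
            - -(((-1 : K) ^ a) • (A * (-νr) ^ (a + (b + 1))))
          = νl ^ a * (νl * A - A * νr) * (-νr) ^ b
            - (νl ^ a * A * (-νr) ^ (b + 1)
                - ((-1 : K) ^ a) • (A * (-νr) ^ (a + (b + 1)))) := by
        abel
      rw [e3]
      exact (claimC a b (by omega)).sub (ih (b + 1) (by omega))
  -- the double sums
  set rect := Finset.range (k + 1) ×ˢ Finset.range (k + 1) with hrect
  set termS : ℕ × ℕ → Matrix (Fin m) (Fin n) (MvPowerSeries (Fin p) K) := fun x =>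
    ((x.1.factorial : K)⁻¹ * (x.2.factorial : K)⁻¹) • (νl ^ x.1 * A * (-νr) ^ x.2)
    with htermS
  set termT : ℕ × ℕ → Matrix (Fin m) (Fin n) (MvPowerSeries (Fin p) K) := fun x =>
    ((x.1.factorial : K)⁻¹ * (x.2.factorial : K)⁻¹) •
      (((-1 : K) ^ x.1) • (A * (-νr) ^ (x.1 + x.2)))
    with htermT
  have hPAQ : expPartial νl k * A * expPartial (-νr) k = ∑ x ∈ rect, termS x := by
    rw [hrect, Finset.sum_product]
    unfold expPartial
    rw [Matrix.sum_mul, Matrix.sum_mul]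
    refine Finset.sum_congr rfl fun a _ => ?_
    rw [Matrix.mul_sum]
    refine Finset.sum_congr rfl fun b _ => ?_
    simp only [htermS]
    rw [Matrix.smul_mul, Matrix.smul_mul, Matrix.mul_smul, smul_smul]
  have hμpow : ∀ a : ℕ, (-νr) ^ a = ((-1 : K) ^ a) • νr ^ a := by
    intro a
    rw [show (-νr) = (-1 : K) • νr from (neg_one_smul K νr).symm, smul_pow]
  have hνrpow : ∀ a : ℕ, νr ^ a = ((-1 : K) ^ a) • (-νr) ^ a := by
    intro a
    rw [hμpow a, smul_smul, ← mul_pow, neg_one_mul, neg_neg, one_pow, one_smul]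
  have hexp : expPartial νr k * expPartial (-νr) k
      = ∑ x ∈ rect, ((x.1.factorial : K)⁻¹ * (x.2.factorial : K)⁻¹) •
          (νr ^ x.1 * (-νr) ^ x.2) := by
    rw [hrect, Finset.sum_product]
    unfold expPartial
    rw [Matrix.sum_mul]
    refine Finset.sum_congr rfl fun a _ => ?_
    rw [Matrix.mul_sum]
    refine Finset.sum_congr rfl fun b _ => ?_
    rw [Matrix.smul_mul, Matrix.mul_smul, smul_smul]
  have hT : ∑ x ∈ rect, termT x = A * (expPartial νr k * expPartial (-νr) k) := by
    rw [hexp, Matrix.mul_sum]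
    refine Finset.sum_congr rfl fun x _ => ?_
    simp only [htermT]
    rw [Matrix.mul_smul]
    congr 1
    rw [hνrpow x.1, Matrix.smul_mul, Matrix.mul_smul, ← pow_add]
  have h10mem : ((1, 0) : ℕ × ℕ) ∈ rect := by
    rw [hrect]
    simp only [Finset.mem_product, Finset.mem_range]
    omega
  have hf10 : termS (1, 0) - termT (1, 0) = νl * A - A * νr := by
    simp only [htermS, htermT]
    simp only [Nat.factorial_one, Nat.factorial_zero, Nat.cast_one, inv_one, mul_one, one_smul,
      pow_one, pow_zero, Nat.add_zero, neg_one_smul, Matrix.mul_one, Matrix.mul_neg, neg_neg,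
      sub_neg_eq_add]
  have partI : Van (j + 1) (∑ x ∈ rect, (termS x - termT x) - (νl * A - A * νr)) := by
    rw [← Finset.add_sum_erase rect _ h10mem, hf10]
    have e : νl * A - A * νr + ∑ x ∈ rect.erase (1, 0), (termS x - termT x)
          - (νl * A - A * νr)
        = ∑ x ∈ rect.erase (1, 0), (termS x - termT x) := by abel
    rw [e]
    apply Van.sum
    intro x hx
    have hxne := Finset.ne_of_mem_erase hx
    by_cases h2 : 2 ≤ x.1 + x.2
    · have hc := claim2 x.1 x.2 h2
      have hsplit : termS x - termT x
          = ((x.1.factorial : K)⁻¹ * (x.2.factorial : K)⁻¹) •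
              (νl ^ x.1 * A * (-νr) ^ x.2
                - ((-1 : K) ^ x.1) • (A * (-νr) ^ (x.1 + x.2))) := by
        simp only [htermS, htermT, smul_sub]
      rw [hsplit]
      exact hc.smul _
    · obtain ⟨x1, x2⟩ := x
      simp only at h2
      have hne' : ¬(x1 = 1 ∧ x2 = 0) := by
        rintro ⟨rfl, rfl⟩
        exact hxne rfl
      have hx1 : x1 = 0 := by omega
      subst hx1
      have e0 : termS (0, x2) - termT (0, x2) = 0 := by
        simp [htermS, htermT]
      rw [e0]
      exact Van.zero _
  have partII : Van (j + 1) (∑ x ∈ rect, termT x - A) := by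
    rw [hT]
    have e : A * (expPartial νr k * expPartial (-νr) k) - A
        = A * (expPartial νr k * expPartial (-νr) k - 1) := by
      rw [Matrix.mul_sub, Matrix.mul_one]
    rw [e]
    exact Van.mul_left A ((van_expPartial_mul_neg νr hνr k).mono hkj)
  have key2 : Van (j + 1)
      (expPartial νl k * A * expPartial (-νr) k - (A + (νl * A - A * νr))) := by
    rw [hPAQ]
    have e : ∑ x ∈ rect, termS x - (A + (νl * A - A * νr))
        = (∑ x ∈ rect, (termS x - termT x) - (νl * A - A * νr))
          + (∑ x ∈ rect, termT x - A) := by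
      rw [Finset.sum_sub_distrib]
      abel
    rw [e]
    exact partI.add partII
  have key1 : Van (j + 1) (El * A * Er - expPartial νl k * A * expPartial (-νr) k) := by
    have e : El * A * Er - expPartial νl k * A * expPartial (-νr) k
        = (El - expPartial νl k) * (A * Er)
          + (expPartial νl k * A) * (Er - expPartial (-νr) k) := by
      rw [Matrix.sub_mul, Matrix.mul_sub]
      simp only [← Matrix.mul_assoc]
      abel
    rw [e]
    exact (hvP.mul_right (A * Er)).add (Van.mul_left (expPartial νl k * A) hvQ)
  have final : Van (j + 1) (El * A * Er - (A + (νl * A - A * νr))) := by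
    have e : El * A * Er - (A + (νl * A - A * νr))
        = (El * A * Er - expPartial νl k * A * expPartial (-νr) k)
          + (expPartial νl k * A * expPartial (-νr) k - (A + (νl * A - A * νr))) := by
      abel
    rw [e]
    exact key1.add key2
  rw [← jet_add]
  exact (jet_eq_iff _ _ _).mpr final
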